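/- (Gaussian upper bound.) There exist constants K, γ, α > 0 such that for all t > 0 and all z, z' ∈ ℍ², H(t, z, z') ≤ K · √(γt)/f(γt) · e^{−α d_g(z,z')²/t}, where f(t) = e^{t/4} t^{3/2}. -/

import Mathlib

open MeasureTheory Real Set

/-- Inverse hyperbolic cosine. -/
noncomputable def arcoshR (x : ℝ) : ℝ := Real.log (x + Real.sqrt (x ^ 2 - 1))

/-- The hyperbolic half-plane, as a subset of `ℝ × ℝ`. -/
def H2 : Set (ℝ × ℝ) := {z | 0 < z.2}

/-- The geodesic distance on the hyperbolic half-plane. -/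
noncomputable def hypDist (z z' : ℝ × ℝ) : ℝ :=
  arcoshR (1 + ((z.1 - z'.1) ^ 2 + (z.2 - z'.2) ^ 2) / (2 * z.2 * z'.2))

/-- The heat kernel of the hyperbolic half-plane. -/
noncomputable def heatH (t : ℝ) (z z' : ℝ × ℝ) : ℝ :=
  Real.sqrt 2 / (4 * Real.pi * t) ^ ((3 : ℝ) / 2) * Real.exp (-t / 4) *
    ∫ s in Set.Ioi (hypDist z z'),
      s * Real.exp (-s ^ 2 / (4 * t)) / Real.sqrt (Real.cosh s - Real.cosh (hypDist z z'))

/-- The function `f(t) = e^{t/4} t^{3/2}`. -/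
noncomputable def fdiag (t : ℝ) : ℝ := Real.exp (t / 4) * t ^ ((3 : ℝ) / 2)

private lemma cosh_sub_cosh_ge {r s : ℝ} (hr : 0 ≤ r) (hrs : r ≤ s) :
    (s ^ 2 - r ^ 2) / 2 ≤ Real.cosh s - Real.cosh r := by
  have ha : 0 ≤ (s + r) / 2 := by linarith
  have hb : 0 ≤ (s - r) / 2 := by linarith
  have h1 : (s + r) / 2 ≤ Real.sinh ((s + r) / 2) := Real.self_le_sinh_iff.mpr ha
  have h2 : (s - r) / 2 ≤ Real.sinh ((s - r) / 2) := Real.self_le_sinh_iff.mpr hb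
  have e1 := Real.cosh_add ((s + r) / 2) ((s - r) / 2)
  have e2 := Real.cosh_sub ((s + r) / 2) ((s - r) / 2)
  rw [show (s + r) / 2 + (s - r) / 2 = s by ring] at e1
  rw [show (s + r) / 2 - (s - r) / 2 = r by ring] at e2
  nlinarith [mul_le_mul h1 h2 hb (le_trans ha h1)]

private lemma sqrt_sub_le {x y : ℝ} (hx : 0 ≤ x) (hy : 0 ≤ y) :
    Real.sqrt (x + y) ≤ Real.sqrt x + Real.sqrt y := by
  have h : x + y ≤ (Real.sqrt x + Real.sqrt y) ^ 2 := by
    nlinarith [Real.sq_sqrt hx, Real.sq_sqrt hy, Real.sqrt_nonneg x, Real.sqrt_nonneg y]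
  calc Real.sqrt (x + y) ≤ Real.sqrt ((Real.sqrt x + Real.sqrt y) ^ 2) := Real.sqrt_le_sqrt h
    _ = _ := Real.sqrt_sq (by positivity)

set_option maxHeartbeats 2000000 in
/-- Gaussian upper bound for the hyperbolic heat kernel. -/
theorem heat_kernel_gaussian_upper_bound :
    ∃ K > 0, ∃ γ > 0, ∃ α > 0, ∀ t : ℝ, 0 < t → ∀ z z' : ℝ × ℝ, z ∈ H2 → z' ∈ H2 →
      heatH t z z' ≤
        K * (Real.sqrt (γ * t) / fdiag (γ * t)) *
          Real.exp (-α * (hypDist z z') ^ 2 / t) := by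
  have hΓ : 0 < Real.Gamma (1 / 4) := Real.Gamma_pos_of_pos (by norm_num)
  set D : ℝ := (32 : ℝ) ^ ((1 : ℝ) / 4) * ((1 / 2) * Real.Gamma (1 / 4)) +
      Real.sqrt (4 * π) / 2 with hD
  have hDpos : 0 < D := by
    rw [hD]
    have h32 : (0:ℝ) < (32 : ℝ) ^ ((1 : ℝ) / 4) := by positivity
    have hspi : (0:ℝ) < Real.sqrt (4 * π) / 2 := by
      have := Real.pi_pos; positivity
    exact add_pos_of_nonneg_of_pos (le_of_lt (mul_pos h32 (by linarith))) hspi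
  refine ⟨2 * D / (4 * π) ^ ((3 : ℝ) / 2), by positivity, 1, one_pos, 1 / 8, by norm_num, ?_⟩
  intro t ht z z' hz hz'
  have hz2 : 0 < z.2 := hz
  have hz2' : 0 < z'.2 := hz'
  set r := hypDist z z' with hrdef
  have hr : 0 ≤ r := by
    rw [hrdef]
    unfold hypDist arcoshR
    apply Real.log_nonneg
    have h1 : (0:ℝ) ≤ ((z.1 - z'.1) ^ 2 + (z.2 - z'.2) ^ 2) / (2 * z.2 * z'.2) := by positivity
    nlinarith [Real.sqrt_nonneg
      ((1 + ((z.1 - z'.1) ^ 2 + (z.2 - z'.2) ^ 2) / (2 * z.2 * z'.2)) ^ 2 - 1)]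
  set b : ℝ := (4 * t)⁻¹ with hbdef
  have hb : 0 < b := by rw [hbdef]; positivity
  set g : ℝ → ℝ := fun v => Real.sqrt r * (v ^ (-(1 : ℝ) / 2) * Real.exp (-b * v ^ 2)) +
      Real.exp (-b * v ^ 2) with hgdef
  have hgint : IntegrableOn g (Ioi 0) :=
    ((integrableOn_rpow_mul_exp_neg_mul_sq hb (by norm_num)).const_mul _).add
      ((integrable_exp_neg_mul_sq hb).integrableOn)
  -- value of ∫ g on (0,∞)
  have hA : ∫ v in Ioi (0:ℝ), v ^ (-(1 : ℝ) / 2) * Real.exp (-b * v ^ 2) =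
      (4 * t) ^ ((1 : ℝ) / 4) * ((1 / 2) * Real.Gamma (1 / 4)) := by
    have h := integral_rpow_mul_exp_neg_mul_rpow (p := 2) (q := -(1 : ℝ) / 2) (b := b)
      two_pos (by norm_num) hb
    rw [show (-(-(1 : ℝ) / 2 + 1) / 2) = -(1 / 4) by norm_num,
      show ((-(1 : ℝ) / 2 + 1) / 2) = 1 / 4 by norm_num] at h
    have h2 : ∀ v ∈ Ioi (0:ℝ), v ^ (-(1 : ℝ) / 2) * Real.exp (-b * v ^ 2) =
        v ^ (-(1 : ℝ) / 2) * Real.exp (-b * v ^ (2:ℝ)) := by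
      intro v hv
      rw [Real.rpow_two]
    rw [setIntegral_congr_fun measurableSet_Ioi h2, h, hbdef,
      Real.inv_rpow (by positivity), Real.rpow_neg (by positivity), inv_inv]
    ring
  have hB : ∫ v in Ioi (0:ℝ), Real.exp (-b * v ^ 2) = Real.sqrt (4 * π * t) / 2 := by
    rw [integral_gaussian_Ioi b, show π / b = 4 * π * t by rw [hbdef]; field_simp]
  have hgval : ∫ v in Ioi (0:ℝ), g v =
      Real.sqrt r * ((4 * t) ^ ((1 : ℝ) / 4) * ((1 / 2) * Real.Gamma (1 / 4))) +
        Real.sqrt (4 * π * t) / 2 := by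
    rw [hgdef]
    rw [integral_add ((integrableOn_rpow_mul_exp_neg_mul_sq hb (by norm_num)).const_mul _)
      ((integrable_exp_neg_mul_sq hb).integrableOn), integral_const_mul, hA, hB]
  -- translation
  have hpre : ((· + r) ⁻¹' Ioi r : Set ℝ) = Ioi 0 := by
    ext x; simp
  have htrans : ∫ s in Ioi r, g (s - r) = ∫ v in Ioi (0:ℝ), g v := by
    have h := (measurePreserving_add_right (volume : Measure ℝ) r).setIntegral_preimage_emb
      (Homeomorph.addRight r).measurableEmbedding (fun s => g (s - r)) (Ioi r)
    rw [hpre] at h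
    simp only [add_sub_cancel_right] at h
    exact h.symm
  have hGint : IntegrableOn (fun s => g (s - r)) (Ioi r) := by
    rw [← (measurePreserving_add_right (volume : Measure ℝ) r).integrableOn_comp_preimage
      (Homeomorph.addRight r).measurableEmbedding, hpre]
    have : ((fun s => g (s - r)) ∘ (· + r)) = g := by
      ext x; simp [Function.comp]
    rwa [this]
  -- pointwise bound
  have key : ∀ s ∈ Ioi r, s * Real.exp (-s ^ 2 / (4 * t)) / Real.sqrt (Real.cosh s - Real.cosh r)
      ≤ Real.sqrt 2 * Real.exp (-b * r ^ 2) * g (s - r) := by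
    intro s hs
    rw [mem_Ioi] at hs
    have hv0 : 0 < s - r := by linarith
    have hs0 : 0 < s := lt_of_le_of_lt hr hs
    have hgv0 : 0 ≤ g (s - r) := by
      simp only [hgdef]
      exact add_nonneg (mul_nonneg (Real.sqrt_nonneg _)
        (mul_nonneg (Real.rpow_nonneg hv0.le _) (Real.exp_pos _).le)) (Real.exp_pos _).le
    have hX : (s - r) * (s + r) / 2 ≤ Real.cosh s - Real.cosh r := by
      have := cosh_sub_cosh_ge hr hs.le
      nlinarith
    have hXhalfpos : 0 < (s - r) * (s + r) / 2 := by
      have : 0 < s + r := by linarith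
      positivity
    have hXpos : 0 < Real.cosh s - Real.cosh r := lt_of_lt_of_le hXhalfpos hX
    rw [div_le_iff₀ (Real.sqrt_pos.mpr hXpos)]
    have hE : Real.exp (-s ^ 2 / (4 * t)) ≤
        Real.exp (-b * r ^ 2) * Real.exp (-b * (s - r) ^ 2) := by
      rw [← Real.exp_add]
      apply Real.exp_le_exp.mpr
      rw [show -s ^ 2 / (4 * t) = -b * s ^ 2 by rw [hbdef]; field_simp]
      have hsq : r ^ 2 + (s - r) ^ 2 ≤ s ^ 2 := by nlinarith [mul_nonneg hr hv0.le]
      nlinarith [mul_le_mul_of_nonneg_left hsq hb.le]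
    calc s * Real.exp (-s ^ 2 / (4 * t))
        ≤ s * (Real.exp (-b * r ^ 2) * Real.exp (-b * (s - r) ^ 2)) :=
          mul_le_mul_of_nonneg_left hE hs0.le
      _ ≤ ((Real.sqrt r + Real.sqrt (s - r)) * Real.sqrt (s + r)) *
            (Real.exp (-b * r ^ 2) * Real.exp (-b * (s - r) ^ 2)) := by
          have h1 : Real.sqrt s ≤ Real.sqrt r + Real.sqrt (s - r) := by
            have h := sqrt_sub_le hr hv0.le
            rwa [show r + (s - r) = s by ring] at h
          have h2 : Real.sqrt s ≤ Real.sqrt (s + r) := Real.sqrt_le_sqrt (by linarith)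
          have h3 : s = Real.sqrt s * Real.sqrt s := (Real.mul_self_sqrt hs0.le).symm
          have h4 : s ≤ (Real.sqrt r + Real.sqrt (s - r)) * Real.sqrt (s + r) := by
            nlinarith [Real.sqrt_nonneg s, Real.sqrt_nonneg r, Real.sqrt_nonneg (s - r),
              Real.sqrt_nonneg (s + r)]
          exact mul_le_mul_of_nonneg_right h4 (by positivity)
      _ = (Real.sqrt 2 * Real.exp (-b * r ^ 2) * g (s - r)) *
            Real.sqrt ((s - r) * (s + r) / 2) := by
          simp only [hgdef]
          have hrw : (s - r) ^ (-(1 : ℝ) / 2) = (Real.sqrt (s - r))⁻¹ := by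
            rw [Real.sqrt_eq_rpow, ← Real.rpow_neg hv0.le]
            norm_num
          rw [hrw, Real.sqrt_div (by nlinarith : (0:ℝ) ≤ (s - r) * (s + r)),
            Real.sqrt_mul hv0.le]
          have hsv : Real.sqrt (s - r) ≠ 0 := (Real.sqrt_pos.mpr hv0).ne'
          have hs2 : Real.sqrt 2 ≠ 0 := by
            have : (0:ℝ) < Real.sqrt 2 := Real.sqrt_pos.mpr two_pos
            linarith
          field_simp
      _ ≤ (Real.sqrt 2 * Real.exp (-b * r ^ 2) * g (s - r)) *
            Real.sqrt (Real.cosh s - Real.cosh r) := by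
          apply mul_le_mul_of_nonneg_left (Real.sqrt_le_sqrt hX)
          positivity
  -- integral bound
  have hIle : (∫ s in Ioi r,
        s * Real.exp (-s ^ 2 / (4 * t)) / Real.sqrt (Real.cosh s - Real.cosh r))
      ≤ Real.sqrt 2 * Real.exp (-b * r ^ 2) * ∫ v in Ioi (0:ℝ), g v := by
    have h1 : (∫ s in Ioi r,
          s * Real.exp (-s ^ 2 / (4 * t)) / Real.sqrt (Real.cosh s - Real.cosh r))
        ≤ ∫ s in Ioi r, Real.sqrt 2 * Real.exp (-b * r ^ 2) * g (s - r) := by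
      apply integral_mono_of_nonneg
      · filter_upwards [ae_restrict_mem measurableSet_Ioi] with s hs
        have hs0 : (0:ℝ) ≤ s := le_trans hr (le_of_lt hs)
        positivity
      · exact hGint.const_mul _
      · filter_upwards [ae_restrict_mem measurableSet_Ioi] with s hs
        exact key s hs
    rw [integral_const_mul, htrans] at h1
    exact h1
  -- absorb the sqrt r factor
  have hsy : Real.sqrt (r ^ 2 / (8 * t)) ≤ Real.exp (r ^ 2 / (8 * t)) := by
    have hy : (0:ℝ) ≤ r ^ 2 / (8 * t) := by positivity
    nlinarith [Real.sq_sqrt hy, Real.sqrt_nonneg (r ^ 2 / (8 * t)),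
      Real.add_one_le_exp (r ^ 2 / (8 * t)), sq_nonneg (Real.sqrt (r ^ 2 / (8 * t)) - 1)]
  have hrle : r ≤ Real.sqrt (8 * t) * Real.exp (r ^ 2 / (8 * t)) := by
    have heq : r = Real.sqrt (8 * t) * Real.sqrt (r ^ 2 / (8 * t)) := by
      rw [← Real.sqrt_mul (by positivity), show (8 * t) * (r ^ 2 / (8 * t)) = r ^ 2 by
        field_simp, Real.sqrt_sq hr]
    calc r = Real.sqrt (8 * t) * Real.sqrt (r ^ 2 / (8 * t)) := heq
      _ ≤ Real.sqrt (8 * t) * Real.exp (r ^ 2 / (8 * t)) :=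
          mul_le_mul_of_nonneg_left hsy (Real.sqrt_nonneg _)
  have hsqrt_r : Real.sqrt r ≤ (8 * t) ^ ((1:ℝ)/4) * Real.exp (r ^ 2 / (8 * t) / 2) := by
    calc Real.sqrt r ≤ Real.sqrt (Real.sqrt (8 * t) * Real.exp (r ^ 2 / (8 * t))) :=
          Real.sqrt_le_sqrt hrle
      _ = Real.sqrt (Real.sqrt (8 * t)) * Real.sqrt (Real.exp (r ^ 2 / (8 * t))) :=
          Real.sqrt_mul (Real.sqrt_nonneg _) _
      _ = (8 * t) ^ ((1:ℝ)/4) * Real.exp (r ^ 2 / (8 * t) / 2) := by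
          have hss : Real.sqrt (Real.sqrt (8 * t)) = (8 * t) ^ ((1:ℝ)/4) := by
            rw [Real.sqrt_eq_rpow (8 * t), Real.sqrt_eq_rpow,
              ← Real.rpow_mul (by positivity)]
            norm_num
          have hse : Real.sqrt (Real.exp (r ^ 2 / (8 * t))) =
              Real.exp (r ^ 2 / (8 * t) / 2) := by
            have hmul : Real.exp (r ^ 2 / (8 * t) / 2) * Real.exp (r ^ 2 / (8 * t) / 2) =
                Real.exp (r ^ 2 / (8 * t)) := by
              rw [← Real.exp_add]; ring_nf
            rw [← hmul, Real.sqrt_mul_self (Real.exp_pos _).le]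
          rw [hss, hse]
  have hsr : Real.sqrt r * Real.exp (-b * r ^ 2) ≤
      (8 * t) ^ ((1:ℝ)/4) * Real.exp (-(1/8) * r ^ 2 / t) := by
    calc Real.sqrt r * Real.exp (-b * r ^ 2)
        ≤ ((8 * t) ^ ((1:ℝ)/4) * Real.exp (r ^ 2 / (8 * t) / 2)) * Real.exp (-b * r ^ 2) :=
          mul_le_mul_of_nonneg_right hsqrt_r (Real.exp_pos _).le
      _ = (8 * t) ^ ((1:ℝ)/4) * Real.exp (r ^ 2 / (8 * t) / 2 + -b * r ^ 2) := by
          rw [mul_assoc, ← Real.exp_add]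
      _ ≤ (8 * t) ^ ((1:ℝ)/4) * Real.exp (-(1/8) * r ^ 2 / t) := by
          apply mul_le_mul_of_nonneg_left _ (by positivity)
          apply Real.exp_le_exp.mpr
          rw [hbdef]
          have heq : r ^ 2 / (8 * t) / 2 + -(4 * t)⁻¹ * r ^ 2 =
              -(1/8) * r ^ 2 / t - r ^ 2 / (16 * t) := by field_simp; ring
          have hpos : (0:ℝ) ≤ r ^ 2 / (16 * t) := by positivity
          linarith
  have her : Real.exp (-b * r ^ 2) ≤ Real.exp (-(1/8) * r ^ 2 / t) := by
    apply Real.exp_le_exp.mpr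
    rw [hbdef]
    have heq : -(4 * t)⁻¹ * r ^ 2 = -(1/8) * r ^ 2 / t - r ^ 2 / (8 * t) := by
      field_simp; ring
    have hpos : (0:ℝ) ≤ r ^ 2 / (8 * t) := by positivity
    linarith
  -- assemble
  have habsorb : Real.sqrt 2 * Real.exp (-b * r ^ 2) * ∫ v in Ioi (0:ℝ), g v ≤
      Real.sqrt 2 * Real.exp (-(1/8) * r ^ 2 / t) * (Real.sqrt t * D) := by
    rw [hgval]
    have h32 : (8 * t) ^ ((1:ℝ)/4) * (4 * t) ^ ((1:ℝ)/4) =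
        (32 : ℝ) ^ ((1:ℝ)/4) * Real.sqrt t := by
      rw [← Real.mul_rpow (by positivity) (by positivity),
        show (8 * t) * (4 * t) = 32 * t ^ 2 by ring,
        Real.mul_rpow (by norm_num) (by positivity), Real.sqrt_eq_rpow,
        ← Real.rpow_natCast t 2, ← Real.rpow_mul ht.le]
      norm_num
    have h4pi : Real.sqrt (4 * π * t) = Real.sqrt (4 * π) * Real.sqrt t :=
      Real.sqrt_mul (by positivity) t
    have hAterm : Real.sqrt r * Real.exp (-b * r ^ 2) *
        ((4 * t) ^ ((1:ℝ)/4) * ((1/2) * Real.Gamma (1/4))) ≤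
        Real.exp (-(1/8) * r ^ 2 / t) *
          ((32 : ℝ) ^ ((1:ℝ)/4) * Real.sqrt t * ((1/2) * Real.Gamma (1/4))) := by
      have h1 : Real.sqrt r * Real.exp (-b * r ^ 2) * (4 * t) ^ ((1:ℝ)/4) ≤
          (8 * t) ^ ((1:ℝ)/4) * Real.exp (-(1/8) * r ^ 2 / t) * (4 * t) ^ ((1:ℝ)/4) :=
        mul_le_mul_of_nonneg_right hsr (by positivity)
      calc Real.sqrt r * Real.exp (-b * r ^ 2) *
          ((4 * t) ^ ((1:ℝ)/4) * ((1/2) * Real.Gamma (1/4)))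
          = (Real.sqrt r * Real.exp (-b * r ^ 2) * (4 * t) ^ ((1:ℝ)/4)) *
            ((1/2) * Real.Gamma (1/4)) := by ring
        _ ≤ ((8 * t) ^ ((1:ℝ)/4) * Real.exp (-(1/8) * r ^ 2 / t) * (4 * t) ^ ((1:ℝ)/4)) *
            ((1/2) * Real.Gamma (1/4)) := by
            apply mul_le_mul_of_nonneg_right h1 (by positivity)
        _ = Real.exp (-(1/8) * r ^ 2 / t) *
            (((8 * t) ^ ((1:ℝ)/4) * (4 * t) ^ ((1:ℝ)/4)) * ((1/2) * Real.Gamma (1/4))) := by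
            ring
        _ = _ := by rw [h32]
    have hBterm : Real.exp (-b * r ^ 2) * (Real.sqrt (4 * π * t) / 2) ≤
        Real.exp (-(1/8) * r ^ 2 / t) * (Real.sqrt (4 * π) / 2 * Real.sqrt t) := by
      rw [h4pi]
      have : (0:ℝ) ≤ Real.sqrt (4 * π) * Real.sqrt t / 2 := by positivity
      calc Real.exp (-b * r ^ 2) * (Real.sqrt (4 * π) * Real.sqrt t / 2)
          ≤ Real.exp (-(1/8) * r ^ 2 / t) * (Real.sqrt (4 * π) * Real.sqrt t / 2) :=
            mul_le_mul_of_nonneg_right her this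
        _ = _ := by ring
    have hexpand : Real.sqrt 2 * Real.exp (-b * r ^ 2) *
        (Real.sqrt r * ((4 * t) ^ ((1:ℝ)/4) * ((1/2) * Real.Gamma (1/4))) +
          Real.sqrt (4 * π * t) / 2) =
        Real.sqrt 2 * (Real.sqrt r * Real.exp (-b * r ^ 2) *
          ((4 * t) ^ ((1:ℝ)/4) * ((1/2) * Real.Gamma (1/4))) +
          Real.exp (-b * r ^ 2) * (Real.sqrt (4 * π * t) / 2)) := by ring
    rw [hexpand, hD]
    have hfinal : Real.sqrt r * Real.exp (-b * r ^ 2) *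
          ((4 * t) ^ ((1:ℝ)/4) * ((1/2) * Real.Gamma (1/4))) +
          Real.exp (-b * r ^ 2) * (Real.sqrt (4 * π * t) / 2) ≤
        Real.exp (-(1/8) * r ^ 2 / t) *
          (Real.sqrt t * ((32 : ℝ) ^ ((1:ℝ)/4) * ((1/2) * Real.Gamma (1/4)) +
            Real.sqrt (4 * π) / 2)) := by
      have := add_le_add hAterm hBterm
      calc _ ≤ _ := this
        _ = _ := by ring
    calc Real.sqrt 2 * (Real.sqrt r * Real.exp (-b * r ^ 2) *
          ((4 * t) ^ ((1:ℝ)/4) * ((1/2) * Real.Gamma (1/4))) +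
          Real.exp (-b * r ^ 2) * (Real.sqrt (4 * π * t) / 2))
        ≤ Real.sqrt 2 * (Real.exp (-(1/8) * r ^ 2 / t) *
          (Real.sqrt t * ((32 : ℝ) ^ ((1:ℝ)/4) * ((1/2) * Real.Gamma (1/4)) +
            Real.sqrt (4 * π) / 2))) :=
          mul_le_mul_of_nonneg_left hfinal (Real.sqrt_nonneg 2)
      _ = _ := by ring
  -- final computation
  unfold heatH
  rw [← hrdef]
  have hpref : (0:ℝ) ≤ Real.sqrt 2 / (4 * π * t) ^ ((3:ℝ)/2) * Real.exp (-t / 4) := by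
    have := Real.pi_pos; positivity
  calc Real.sqrt 2 / (4 * π * t) ^ ((3:ℝ)/2) * Real.exp (-t / 4) *
        ∫ s in Ioi r, s * Real.exp (-s ^ 2 / (4 * t)) / Real.sqrt (Real.cosh s - Real.cosh r)
      ≤ Real.sqrt 2 / (4 * π * t) ^ ((3:ℝ)/2) * Real.exp (-t / 4) *
        (Real.sqrt 2 * Real.exp (-(1/8) * r ^ 2 / t) * (Real.sqrt t * D)) :=
        mul_le_mul_of_nonneg_left (le_trans hIle habsorb) hpref
    _ = 2 * D / (4 * π) ^ ((3:ℝ)/2) * (Real.sqrt (1 * t) / fdiag (1 * t)) *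
        Real.exp (-(1/8) * r ^ 2 / t) := by
        rw [one_mul]
        unfold fdiag
        rw [Real.mul_rpow (by positivity : (0:ℝ) ≤ 4 * π) ht.le,
          show -t / 4 = -(t / 4) by ring, Real.exp_neg]
        have h2 : Real.sqrt 2 * Real.sqrt 2 = 2 := Real.mul_self_sqrt two_pos.le
        have hne1 : ((4 * π) ^ ((3:ℝ)/2) : ℝ) ≠ 0 := by positivity
        have hne2 : (t ^ ((3:ℝ)/2) : ℝ) ≠ 0 := by positivity
        have hne3 : Real.exp (t / 4) ≠ 0 := (Real.exp_pos _).ne'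
        field_simp
        linear_combination h2
    _ = _ := by norm_num
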